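/- Let u, v : (0,1) → (0,∞) be strictly decreasing homeomorphisms with u(t) < μ(t) < v(t) for all t ∈ (0,1). Let y > 0, let p be a nonnegative integer, let r ∈ (0,1) satisfy μ(r) = y, and let s₁, s₂ ∈ (0,1) satisfy u(s₁) = 2^(-p)·y and v(s₂) = 2^(-p)·y. Then L(s₁,-p) < r < L(s₂,-p), where L(·,-p) denotes the p-th term of the descending Landen sequence. -/

import Mathlib

/-- Descending Landen sequence: `descL r p = L(r,-p)`. -/
noncomputable def descL (r : ℝ) : ℕ → ℝ
  | 0 => r
  | p + 1 => (descL r p / (1 + Real.sqrt (1 - (descL r p) ^ 2))) ^ 2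

/-- Ascending Landen sequence: `ascL r p = L(r,p)`. -/
noncomputable def ascL (r : ℝ) : ℕ → ℝ
  | 0 => r
  | p + 1 => 2 * Real.sqrt (ascL r p) / (1 + ascL r p)

/-- Complete elliptic integral of the first kind. -/
noncomputable def ellK (r : ℝ) : ℝ :=
  ∫ x in (0:ℝ)..1, 1 / Real.sqrt ((1 - x ^ 2) * (1 - r ^ 2 * x ^ 2))

/-- The Grötzsch modulus function `μ`. -/
noncomputable def mu (r : ℝ) : ℝ :=
  Real.pi / 2 * ellK (Real.sqrt (1 - r ^ 2)) / ellK r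

section DescLAux
open Real Set MeasureTheory intervalIntegral


noncomputable def elf (r x : ℝ) : ℝ := 1 / Real.sqrt ((1 - x ^ 2) * (1 - r ^ 2 * x ^ 2))

lemma elf_meas (r : ℝ) : Measurable (elf r) := by
  unfold elf
  have h : Measurable fun x : ℝ => (1 - x ^ 2) * (1 - r ^ 2 * x ^ 2) :=
    ((measurable_const.sub (measurable_id.pow_const 2)).mul
      (measurable_const.sub (measurable_const.mul (measurable_id.pow_const 2))))
  exact measurable_const.div h.sqrt

lemma elf_nonneg (r x : ℝ) : 0 ≤ elf r x := by
  unfold elf; positivity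

lemma elf_pos {r x : ℝ} (hr : r ∈ Ioo (0:ℝ) 1) (hx : x ∈ Ioo (0:ℝ) 1) : 0 < elf r x := by
  obtain ⟨hr0, hr1⟩ := hr; obtain ⟨hx0, hx1⟩ := hx
  have h1 : (0:ℝ) < 1 - x ^ 2 := by nlinarith
  have h2 : (0:ℝ) < 1 - r ^ 2 * x ^ 2 := by nlinarith
  unfold elf; positivity

lemma elf_intble {r : ℝ} (hr : r ∈ Ioo (0:ℝ) 1) :
    IntervalIntegrable (elf r) volume 0 1 := by
  obtain ⟨hr0, hr1⟩ := hr
  have hc : (0:ℝ) < 1 - r ^ 2 := by nlinarith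
  have h0 : IntervalIntegrable (fun x : ℝ => x ^ (-(1/2) : ℝ)) volume 0 1 :=
    intervalIntegrable_rpow' (by norm_num)
  have h1 : IntervalIntegrable (fun x : ℝ => (1 - x) ^ (-(1/2) : ℝ)) volume 0 1 := by
    have := (h0.comp_sub_left 1)
    norm_num at this
    exact this.symm
  have h2 : IntervalIntegrable
      (fun x : ℝ => (1 - r ^ 2) ^ (-(1/2) : ℝ) * (1 - x) ^ (-(1/2) : ℝ)) volume 0 1 :=
    h1.const_mul _
  apply h2.mono_fun ((elf_meas r).aestronglyMeasurable.restrict)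
  rw [Filter.EventuallyLE, ae_restrict_iff' measurableSet_uIoc]
  refine Filter.Eventually.of_forall (fun x hx => ?_)
  rw [uIoc_of_le (by norm_num : (0:ℝ) ≤ 1)] at hx
  obtain ⟨hx0, hx1⟩ := hx
  have hxx : (0:ℝ) ≤ 1 - x := by linarith
  have hrhs : (0:ℝ) ≤ (1 - r ^ 2) ^ (-(1/2):ℝ) * (1 - x) ^ (-(1/2):ℝ) :=
    mul_nonneg (Real.rpow_nonneg hc.le _) (Real.rpow_nonneg hxx _)
  rw [Real.norm_eq_abs, Real.norm_eq_abs, abs_of_nonneg (elf_nonneg r x), abs_of_nonneg hrhs]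
  have hrw : (1 - r ^ 2) ^ (-(1/2):ℝ) * (1 - x) ^ (-(1/2):ℝ)
      = 1 / Real.sqrt ((1 - r ^ 2) * (1 - x)) := by
    rw [Real.rpow_neg hc.le, Real.rpow_neg hxx, ← Real.sqrt_eq_rpow, ← Real.sqrt_eq_rpow,
      Real.sqrt_mul hc.le, one_div, mul_inv]
  rw [hrw]
  rcases eq_or_lt_of_le hx1 with h1x | h1x
  · have : (1 - x ^ 2) = 0 := by rw [h1x]; norm_num
    unfold elf
    rw [this, zero_mul, Real.sqrt_zero, div_zero]
    positivity
  · have hB : (0:ℝ) < (1 - r ^ 2) * (1 - x) := by nlinarith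
    have e1 : (0:ℝ) ≤ 1 - x ^ 2 := by nlinarith
    have e2 : (0:ℝ) ≤ 1 - r ^ 2 * x ^ 2 := by nlinarith
    have hA : (1 - r ^ 2) * (1 - x) ≤ (1 - x ^ 2) * (1 - r ^ 2 * x ^ 2) := by
      nlinarith [mul_nonneg hxx (mul_nonneg (sq_nonneg r) e1),
        mul_nonneg hxx (mul_nonneg hx0.le e2)]
    unfold elf
    apply one_div_le_one_div_of_le (Real.sqrt_pos.mpr hB) (Real.sqrt_le_sqrt hA)



lemma ellK_eq_elf (r : ℝ) : ellK r = ∫ x in (0:ℝ)..1, elf r x := rfl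

lemma ellK_pos {r : ℝ} (hr : r ∈ Ioo (0:ℝ) 1) : 0 < ellK r := by
  rw [ellK_eq_elf]
  exact intervalIntegral_pos_of_pos_on (elf_intble hr)
    (fun x hx => elf_pos hr hx) one_pos

lemma ellK_strictMono {a b : ℝ} (ha : a ∈ Ioo (0:ℝ) 1) (hb : b ∈ Ioo (0:ℝ) 1)
    (hab : a < b) : ellK a < ellK b := by
  rw [ellK_eq_elf, ellK_eq_elf, ← sub_pos,
    ← intervalIntegral.integral_sub (elf_intble hb) (elf_intble ha)]
  refine intervalIntegral_pos_of_pos_on ((elf_intble hb).sub (elf_intble ha))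
    (fun x hx => ?_) one_pos
  have h1 : (0:ℝ) < 1 - x ^ 2 := by nlinarith [hx.1, hx.2]
  have h2 : (0:ℝ) < 1 - b ^ 2 * x ^ 2 := by nlinarith [hx.1, hx.2, hb.1, hb.2]
  have h3 : (1 - x ^ 2) * (1 - b ^ 2 * x ^ 2) < (1 - x ^ 2) * (1 - a ^ 2 * x ^ 2) := by
    have hsq : a ^ 2 < b ^ 2 := by nlinarith [ha.1]
    have : a ^ 2 * x ^ 2 < b ^ 2 * x ^ 2 :=
      mul_lt_mul_of_pos_right hsq (pow_pos hx.1 2)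
    nlinarith
  have h4 : Real.sqrt ((1 - x ^ 2) * (1 - b ^ 2 * x ^ 2))
      < Real.sqrt ((1 - x ^ 2) * (1 - a ^ 2 * x ^ 2)) :=
    Real.sqrt_lt_sqrt (by positivity) h3
  have h5 : (0:ℝ) < Real.sqrt ((1 - x ^ 2) * (1 - b ^ 2 * x ^ 2)) :=
    Real.sqrt_pos.mpr (by positivity)
  have : elf a x < elf b x := by
    unfold elf
    exact one_div_lt_one_div_of_lt h5 h4
  linarith

noncomputable def lg (k t : ℝ) : ℝ := (1 + k) * t / (1 + k * t ^ 2)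
noncomputable def lgd (k t : ℝ) : ℝ := (1 + k) * (1 - k * t ^ 2) / (1 + k * t ^ 2) ^ 2

lemma lg_hasDeriv {k : ℝ} (hk0 : 0 ≤ k) (t : ℝ) : HasDerivAt (lg k) (lgd k t) t := by
  have hd : (0:ℝ) < 1 + k * t ^ 2 := by positivity
  have h1 : HasDerivAt (fun t : ℝ => (1 + k) * t) (1 + k) t := by
    simpa using (hasDerivAt_id t).const_mul (1 + k)
  have h2 : HasDerivAt (fun t : ℝ => 1 + k * t ^ 2) (k * (2 * t)) t := by
    simpa using ((hasDerivAt_pow 2 t).const_mul k).const_add 1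
  have := h1.div h2 hd.ne'
  refine this.congr_deriv ?_
  unfold lgd
  field_simp
  ring

lemma lg_cont {k : ℝ} (hk0 : 0 ≤ k) : Continuous (lg k) := by
  unfold lg
  exact (continuous_const.mul continuous_id).div
    (continuous_const.add (continuous_const.mul (continuous_pow 2)))
    (fun t => by positivity)

lemma lg_injOn {k : ℝ} (hk : k ∈ Ioo (0:ℝ) 1) : InjOn (lg k) (Ioo 0 1) := by
  intro t1 h1 t2 h2 heq
  unfold lg at heq
  have hk0 : (0:ℝ) ≤ k := hk.1.le
  have d1 : (0:ℝ) < 1 + k * t1 ^ 2 := by positivity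
  have d2 : (0:ℝ) < 1 + k * t2 ^ 2 := by positivity
  rw [div_eq_div_iff d1.ne' d2.ne'] at heq
  have h0 : (t1 - t2) * ((1 - k * t1 * t2) * (1 + k)) = 0 := by linear_combination heq
  have p1 : k * t1 < 1 := by nlinarith [h1.2, hk.2, hk.1, h1.1]
  have hlt : 0 < 1 - k * t1 * t2 := by
    nlinarith [mul_pos (mul_pos hk.1 h1.1) (sub_pos.mpr h2.2)]
  have hk1 : (0:ℝ) < 1 + k := by linarith [hk.1]
  rcases mul_eq_zero.mp h0 with h | h
  · linarith
  · exfalso; nlinarith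
lemma lg_image {k : ℝ} (hk : k ∈ Ioo (0:ℝ) 1) : lg k '' Ioo 0 1 = Ioo 0 1 := by
  apply Subset.antisymm
  · rintro x ⟨t, ht, rfl⟩
    have hk0 : (0:ℝ) ≤ k := hk.1.le
    have d : (0:ℝ) < 1 + k * t ^ 2 := by positivity
    constructor
    · unfold lg
      have : (0:ℝ) < (1 + k) * t := by nlinarith [ht.1, hk.1]
      positivity
    · unfold lg
      rw [div_lt_one d]
      nlinarith [ht.1, ht.2, hk.1, hk.2, mul_pos (sub_pos.mpr ht.2) (show (0:ℝ) < 1 - k * t by nlinarith [ht.2, hk.2, ht.1, hk.1])]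
  · have h0 : lg k 0 = 0 := by unfold lg; simp
    have h1 : lg k 1 = 1 := by
      unfold lg
      have : (0:ℝ) < 1 + k := by linarith [hk.1]
      field_simp
    have := intermediate_value_Ioo (zero_le_one) ((lg_cont hk.1.le).continuousOn (s := Icc 0 1))
    rw [h0, h1] at this
    exact this

lemma landen {k : ℝ} (hk : k ∈ Ioo (0:ℝ) 1) :
    ellK (2 * Real.sqrt k / (1 + k)) = (1 + k) * ellK k := by
  obtain ⟨hk0, hk1⟩ := hk
  have hkk : (0:ℝ) < 1 + k := by linarith
  set L := 2 * Real.sqrt k / (1 + k) with hLdef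
  have hL2 : L ^ 2 = 4 * k / (1 + k) ^ 2 := by
    rw [hLdef, div_pow, mul_pow, Real.sq_sqrt hk0.le]
    norm_num
  have key : ∀ t ∈ Ioo (0:ℝ) 1, |lgd k t| • elf L (lg k t) = (1 + k) * elf k t := by
    intro t ht
    have hd : (0:ℝ) < 1 + k * t ^ 2 := by positivity
    have h1t : (0:ℝ) < 1 - k * t ^ 2 := by nlinarith [ht.1, ht.2]
    have hA : (0:ℝ) < (1 - t ^ 2) * (1 - k ^ 2 * t ^ 2) := by
      have : (0:ℝ) < 1 - t ^ 2 := by nlinarith [ht.1, ht.2]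
      have : (0:ℝ) < 1 - k ^ 2 * t ^ 2 := by nlinarith [ht.1, ht.2]
      positivity
    have earg : (1 - (lg k t) ^ 2) * (1 - L ^ 2 * (lg k t) ^ 2)
        = ((1 - t ^ 2) * (1 - k ^ 2 * t ^ 2)) * ((1 - k * t ^ 2) / (1 + k * t ^ 2) ^ 2) ^ 2 := by
      rw [hL2]
      unfold lg
      field_simp
      ring
    have hq : (0:ℝ) < (1 - k * t ^ 2) / (1 + k * t ^ 2) ^ 2 := by positivity
    have hsq : Real.sqrt ((1 - (lg k t) ^ 2) * (1 - L ^ 2 * (lg k t) ^ 2))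
        = Real.sqrt ((1 - t ^ 2) * (1 - k ^ 2 * t ^ 2)) * ((1 - k * t ^ 2) / (1 + k * t ^ 2) ^ 2) := by
      rw [earg, Real.sqrt_mul hA.le, Real.sqrt_sq hq.le]
    have hgd : |lgd k t| = (1 + k) * (1 - k * t ^ 2) / (1 + k * t ^ 2) ^ 2 := by
      unfold lgd
      rw [abs_of_pos (by positivity)]
    have hsA : (0:ℝ) < Real.sqrt ((1 - t ^ 2) * (1 - k ^ 2 * t ^ 2)) := Real.sqrt_pos.mpr hA
    rw [smul_eq_mul, hgd]
    unfold elf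
    rw [hsq]
    have hsA : (0:ℝ) < Real.sqrt ((1 - t ^ 2) * (1 - k ^ 2 * t ^ 2)) := Real.sqrt_pos.mpr hA
    set S := Real.sqrt ((1 - t ^ 2) * (1 - k ^ 2 * t ^ 2)) with hS
    field_simp
  have himg := lg_image ⟨hk0, hk1⟩
  have hchg : ∫ x in Ioo (0:ℝ) 1, elf L x = ∫ t in Ioo (0:ℝ) 1, |lgd k t| • elf L (lg k t) := by
    have h := MeasureTheory.integral_image_eq_integral_abs_deriv_smul measurableSet_Ioo
      (fun t _ => (lg_hasDeriv hk0.le t).hasDerivWithinAt) (lg_injOn ⟨hk0, hk1⟩) (elf L)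
    rw [himg] at h
    exact h
  calc ellK L = ∫ x in Ioo (0:ℝ) 1, elf L x := by
        rw [ellK_eq_elf, intervalIntegral.integral_of_le zero_le_one,
          MeasureTheory.integral_Ioc_eq_integral_Ioo]
    _ = ∫ t in Ioo (0:ℝ) 1, |lgd k t| • elf L (lg k t) := hchg
    _ = ∫ t in Ioo (0:ℝ) 1, (1 + k) * elf k t :=
        MeasureTheory.setIntegral_congr_fun measurableSet_Ioo (fun t ht => key t ht)
    _ = (1 + k) * ∫ t in Ioo (0:ℝ) 1, elf k t := by
        rw [MeasureTheory.integral_const_mul]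
    _ = (1 + k) * ellK k := by
        rw [ellK_eq_elf, intervalIntegral.integral_of_le zero_le_one,
          MeasureTheory.integral_Ioc_eq_integral_Ioo]

lemma sqrt_one_sub_sq_mem {r : ℝ} (hr : r ∈ Ioo (0:ℝ) 1) :
    Real.sqrt (1 - r ^ 2) ∈ Ioo (0:ℝ) 1 := by
  obtain ⟨h0, h1⟩ := hr
  constructor
  · exact Real.sqrt_pos.mpr (by nlinarith)
  · have h := Real.sqrt_lt_sqrt (show (0:ℝ) ≤ 1 - r ^ 2 by nlinarith)
      (show 1 - r ^ 2 < 1 by nlinarith)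
    simpa using h

lemma mu_pos {r : ℝ} (hr : r ∈ Ioo (0:ℝ) 1) : 0 < mu r := by
  unfold mu
  have h1 := ellK_pos (sqrt_one_sub_sq_mem hr)
  have h2 := ellK_pos hr
  have := Real.pi_pos
  positivity

lemma mu_strictAnti : StrictAntiOn mu (Ioo (0:ℝ) 1) := by
  intro a ha b hb hab
  have ha' := sqrt_one_sub_sq_mem ha
  have hb' := sqrt_one_sub_sq_mem hb
  have hb'a' : Real.sqrt (1 - b ^ 2) < Real.sqrt (1 - a ^ 2) := by
    apply Real.sqrt_lt_sqrt (by nlinarith [hb.1, hb.2]) (by nlinarith [ha.1])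
  have hK1 : ellK (Real.sqrt (1 - b ^ 2)) < ellK (Real.sqrt (1 - a ^ 2)) :=
    ellK_strictMono hb' ha' hb'a'
  have hK2 : ellK a < ellK b := ellK_strictMono ha hb hab
  have hKa := ellK_pos ha
  have hKb' := ellK_pos hb'
  have hpi := Real.pi_pos
  unfold mu
  rw [div_lt_div_iff₀ (ellK_pos hb) hKa]
  have hKa' := ellK_pos ha'
  have t1 : Real.pi / 2 * ellK (Real.sqrt (1 - b ^ 2)) * ellK a
      < Real.pi / 2 * ellK (Real.sqrt (1 - a ^ 2)) * ellK a := by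
    exact mul_lt_mul_of_pos_right (mul_lt_mul_of_pos_left hK1 (by linarith)) hKa
  have t2 : Real.pi / 2 * ellK (Real.sqrt (1 - a ^ 2)) * ellK a
      < Real.pi / 2 * ellK (Real.sqrt (1 - a ^ 2)) * ellK b := by
    exact mul_lt_mul_of_pos_left hK2 (by positivity)
  linarith

lemma mu_half {k : ℝ} (hk : k ∈ Ioo (0:ℝ) 1) :
    mu (2 * Real.sqrt k / (1 + k)) = mu k / 2 := by
  obtain ⟨hk0, hk1⟩ := hk
  have hkk : (0:ℝ) < 1 + k := by linarith
  set m : ℝ := (1 - k) / (1 + k) with hm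
  have hm0 : (0:ℝ) < m := div_pos (by linarith) hkk
  have hm1 : m < 1 := by rw [hm, div_lt_one hkk]; linarith
  have hs2 : (2 * Real.sqrt k / (1 + k)) ^ 2 = 4 * k / (1 + k) ^ 2 := by
    rw [div_pow, mul_pow, Real.sq_sqrt hk0.le]; norm_num
  -- √(1 - s²) = m
  have hs' : Real.sqrt (1 - (2 * Real.sqrt k / (1 + k)) ^ 2) = m := by
    have : 1 - (2 * Real.sqrt k / (1 + k)) ^ 2 = m ^ 2 := by
      rw [hs2, hm, div_pow]
      field_simp
      ring
    rw [this, Real.sqrt_sq hm0.le]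
  -- 2√m/(1+m) = √(1-k²)
  have hid : 2 * Real.sqrt m / (1 + m) = Real.sqrt (1 - k ^ 2) := by
    have h1m : 1 + m = 2 / (1 + k) := by rw [hm]; field_simp; ring
    have e1 : 2 * Real.sqrt m / (1 + m) = Real.sqrt ((1 + k) ^ 2) * Real.sqrt m := by
      rw [h1m, Real.sqrt_sq hkk.le]
      field_simp
    rw [e1, ← Real.sqrt_mul (by positivity) m]
    congr 1
    rw [hm]
    field_simp
    ring
  have hKs := landen ⟨hk0, hk1⟩
  have hKm : ellK (Real.sqrt (1 - k ^ 2)) = (1 + m) * ellK m := by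
    rw [← hid]; exact landen ⟨hm0, hm1⟩
  have hKk := ellK_pos ⟨hk0, hk1⟩
  unfold mu
  rw [hs', hKs, hKm]
  have h1m : 1 + m = 2 / (1 + k) := by rw [hm]; field_simp; ring
  rw [h1m]
  field_simp

lemma descL1_mem {t : ℝ} (ht : t ∈ Ioo (0:ℝ) 1) :
    (t / (1 + Real.sqrt (1 - t ^ 2))) ^ 2 ∈ Ioo (0:ℝ) 1 := by
  obtain ⟨h0, h1⟩ := ht
  have hσ : (0:ℝ) ≤ Real.sqrt (1 - t ^ 2) := Real.sqrt_nonneg _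
  have hd : (0:ℝ) < 1 + Real.sqrt (1 - t ^ 2) := by linarith
  constructor
  · positivity
  · have hlt : t / (1 + Real.sqrt (1 - t ^ 2)) < 1 := by
      rw [div_lt_one hd]; linarith
    exact pow_lt_one₀ (by positivity) hlt two_ne_zero

lemma descL_mem {s : ℝ} (hs : s ∈ Ioo (0:ℝ) 1) (p : ℕ) : descL s p ∈ Ioo (0:ℝ) 1 := by
  induction p with
  | zero => exact hs
  | succ p ih => exact descL1_mem ih

lemma asc_of_desc {t : ℝ} (ht : t ∈ Ioo (0:ℝ) 1) :
    2 * Real.sqrt ((t / (1 + Real.sqrt (1 - t ^ 2))) ^ 2)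
      / (1 + (t / (1 + Real.sqrt (1 - t ^ 2))) ^ 2) = t := by
  obtain ⟨h0, h1⟩ := ht
  set σ := Real.sqrt (1 - t ^ 2) with hσdef
  have hσ2 : σ ^ 2 = 1 - t ^ 2 := Real.sq_sqrt (by nlinarith)
  have hσ0 : (0:ℝ) ≤ σ := Real.sqrt_nonneg _
  have hd : (0:ℝ) < 1 + σ := by linarith
  rw [Real.sqrt_sq (by positivity)]
  have hden : 1 + (t / (1 + σ)) ^ 2 = 2 / (1 + σ) := by
    field_simp
    linear_combination hσ2
  rw [hden]
  field_simp

lemma mu_descL1 {s : ℝ} (hs : s ∈ Ioo (0:ℝ) 1) :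
    mu ((s / (1 + Real.sqrt (1 - s ^ 2))) ^ 2) = 2 * mu s := by
  have hk := descL1_mem hs
  have := mu_half hk
  rw [asc_of_desc hs] at this
  linarith

lemma mu_descL {s : ℝ} (hs : s ∈ Ioo (0:ℝ) 1) (p : ℕ) :
    mu (descL s p) = 2 ^ p * mu s := by
  induction p with
  | zero => simp [descL]
  | succ p ih =>
      have ht := descL_mem hs p
      have h := mu_descL1 ht
      show mu ((descL s p / (1 + Real.sqrt (1 - (descL s p) ^ 2))) ^ 2) = _
      rw [h, ih]
      ring


end DescLAux

open Real Set MeasureTheory intervalIntegral in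
theorem descL_bounds_for_mu_inv (u v : ℝ → ℝ)
    (hu_anti : StrictAntiOn u (Set.Ioo (0:ℝ) 1))
    (hu_bij : Set.BijOn u (Set.Ioo (0:ℝ) 1) (Set.Ioi (0:ℝ)))
    (hv_anti : StrictAntiOn v (Set.Ioo (0:ℝ) 1))
    (hv_bij : Set.BijOn v (Set.Ioo (0:ℝ) 1) (Set.Ioi (0:ℝ)))
    (huv : ∀ t ∈ Set.Ioo (0:ℝ) 1, u t < mu t ∧ mu t < v t)
    (y : ℝ) (hy : 0 < y) (p : ℕ)
    (r : ℝ) (hr : r ∈ Set.Ioo (0:ℝ) 1) (hμr : mu r = y)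
    (s₁ : ℝ) (hs₁ : s₁ ∈ Set.Ioo (0:ℝ) 1) (hs₁eq : u s₁ = (2:ℝ) ^ (-(p:ℤ)) * y)
    (s₂ : ℝ) (hs₂ : s₂ ∈ Set.Ioo (0:ℝ) 1) (hs₂eq : v s₂ = (2:ℝ) ^ (-(p:ℤ)) * y) :
    descL s₁ p < r ∧ r < descL s₂ p := by
  have h2 : ((2:ℝ) ^ p) * ((2:ℝ) ^ (-(p:ℤ)) * y) = y := by
    rw [zpow_neg, zpow_natCast]
    field_simp
  obtain ⟨hu, _⟩ := huv s₁ hs₁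
  obtain ⟨_, hv⟩ := huv s₂ hs₂
  have hd₁ := descL_mem hs₁ p
  have hd₂ := descL_mem hs₂ p
  have k1 : mu r < mu (descL s₁ p) := by
    rw [hμr, mu_descL hs₁ p]
    calc y = 2 ^ p * ((2:ℝ) ^ (-(p:ℤ)) * y) := h2.symm
    _ = 2 ^ p * u s₁ := by rw [hs₁eq]
    _ < 2 ^ p * mu s₁ := by exact mul_lt_mul_of_pos_left hu (by positivity)
  have k2 : mu (descL s₂ p) < mu r := by
    rw [hμr, mu_descL hs₂ p]
    calc 2 ^ p * mu s₂ < 2 ^ p * v s₂ := by exact mul_lt_mul_of_pos_left hv (by positivity)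
    _ = 2 ^ p * ((2:ℝ) ^ (-(p:ℤ)) * y) := by rw [hs₂eq]
    _ = y := h2
  exact ⟨(mu_strictAnti.lt_iff_gt hr hd₁).mp k1, (mu_strictAnti.lt_iff_gt hd₂ hr).mp k2⟩
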